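/- Boundedness of second difference quotients in discrete L²: let T > 0. There exists a constant C > 0 depending only on T such that for every s with 0 < s ≤ T and every function f : ℝ → ℝ of class C² on [0, T], setting K = ⌊T/s⌋, t^k = k·s and t^{k+1/2} = (k + 1/2)·s, both (s·Σ_{k=0}^{K−1} (4(f(t^{k+1}) − 2f(t^{k+1/2}) + f(t^k))/s²)²)^{1/2} ≤ C·(∫₀^T [f(t)² + f'(t)² + f''(t)²] dt)^{1/2} and (s·Σ_{k=1}^{K−1} ((f(t^{k+1}) − 2f(t^k) + f(t^{k−1}))/s²)²)^{1/2} ≤ C·(∫₀^T [f(t)² + f'(t)² + f''(t)²] dt)^{1/2} hold. -/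

import Mathlib

open Finset

noncomputable section


open intervalIntegral MeasureTheory in
private lemma ftc_aux' {T : ℝ} {g g' : ℝ → ℝ} (hg : ContinuousOn g (Set.Icc 0 T))
    (hg' : ContinuousOn g' (Set.Icc 0 T))
    (hd : ∀ x ∈ Set.Ioo 0 T, HasDerivAt g (g' x) x)
    {a b : ℝ} (ha : 0 ≤ a) (hab : a ≤ b) (hb : b ≤ T) :
    ∫ x in a..b, g' x = g b - g a := by
  apply integral_eq_sub_of_hasDeriv_right_of_le hab
  · exact hg.mono (Set.Icc_subset_Icc ha hb)
  · intro x hx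
    exact (hd x ⟨lt_of_le_of_lt ha hx.1, lt_of_lt_of_le hx.2 hb⟩).hasDerivWithinAt
  · exact (hg'.mono (Set.Icc_subset_Icc ha hb)).intervalIntegrable_of_Icc hab

open intervalIntegral MeasureTheory in
private lemma cs_aux' {a b : ℝ} (hab : a ≤ b) {G : ℝ → ℝ}
    (hG : ContinuousOn G (Set.Icc a b)) :
    (∫ t in a..b, |G t|) ^ 2 ≤ (b - a) * ∫ t in a..b, G t ^ 2 := by
  rcases eq_or_lt_of_le hab with rfl | hlt
  · simp
  set M := ∫ t in a..b, |G t| with hM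
  set Q := ∫ t in a..b, G t ^ 2 with hQ
  have hGi : IntervalIntegrable (fun t => |G t|) volume a b :=
    hG.abs.intervalIntegrable_of_Icc hab
  have hG2i : IntervalIntegrable (fun t => G t ^ 2) volume a b :=
    (hG.pow 2).intervalIntegrable_of_Icc hab
  have h0 : (0:ℝ) ≤ ∫ t in a..b, ((b - a) * |G t| - M) ^ 2 :=
    integral_nonneg hab (fun u _ => sq_nonneg _)
  have hexp : ∫ t in a..b, ((b - a) * |G t| - M) ^ 2
      = (b - a) ^ 2 * Q - 2 * (b - a) * M * M + M ^ 2 * (b - a) := by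
    have heq : (fun t => ((b - a) * |G t| - M) ^ 2)
        = fun t => (b - a) ^ 2 * G t ^ 2 - 2 * (b - a) * M * |G t| + M ^ 2 := by
      funext t
      rw [← sq_abs (G t)]
      ring
    rw [heq]
    rw [intervalIntegral.integral_add (((hG2i.const_mul _).sub (hGi.const_mul _)))
      intervalIntegrable_const,
      intervalIntegral.integral_sub (hG2i.const_mul _) (hGi.const_mul _),
      intervalIntegral.integral_const_mul, intervalIntegral.integral_const_mul,
      intervalIntegral.integral_const]
    simp [smul_eq_mul]
    ring
  rw [hexp] at h0
  nlinarith [sq_nonneg M, hlt]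

open intervalIntegral MeasureTheory in
private lemma sd_aux' {T : ℝ} {f F1 F2 : ℝ → ℝ}
    (hcf : ContinuousOn f (Set.Icc 0 T)) (hcF1 : ContinuousOn F1 (Set.Icc 0 T))
    (hcF2 : ContinuousOn F2 (Set.Icc 0 T))
    (hd1 : ∀ x ∈ Set.Ioo 0 T, HasDerivAt f (F1 x) x)
    (hd2 : ∀ x ∈ Set.Ioo 0 T, HasDerivAt F1 (F2 x) x)
    {a h : ℝ} (ha : 0 ≤ a) (hh : 0 < h) (hha : a + 2 * h ≤ T) :
    (f (a + 2 * h) - 2 * f (a + h) + f a) ^ 2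
      ≤ 2 * h ^ 3 * ∫ t in a..(a + 2 * h), F2 t ^ 2 := by
  have hsub : Set.Icc a (a + 2 * h) ⊆ Set.Icc 0 T :=
    Set.Icc_subset_Icc ha hha
  set M := ∫ t in a..(a + 2 * h), |F2 t| with hMdef
  set Q := ∫ t in a..(a + 2 * h), F2 t ^ 2 with hQdef
  have hF2i : IntervalIntegrable (fun t => |F2 t|) volume a (a + 2 * h) :=
    ((hcF2.mono hsub).abs).intervalIntegrable_of_Icc (by linarith)
  have hstep : ∀ u ∈ Set.Icc a (a + h), |F1 (u + h) - F1 u| ≤ M := by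
    intro u hu
    have h1 : ∫ x in u..(u + h), F2 x = F1 (u + h) - F1 u :=
      ftc_aux' hcF1 hcF2 hd2 (le_trans ha hu.1) (by linarith) (by linarith [hu.2])
    rw [← h1]
    calc |∫ x in u..(u + h), F2 x| ≤ ∫ x in u..(u + h), |F2 x| :=
          abs_integral_le_integral_abs (by linarith)
      _ ≤ M := integral_mono_interval hu.1 (by linarith) (by linarith [hu.2])
          (Filter.Eventually.of_forall (fun x => abs_nonneg _)) hF2i
  have hΔ : f (a + 2 * h) - 2 * f (a + h) + f a
      = ∫ u in a..(a + h), (F1 (u + h) - F1 u) := by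
    have hi1 : ∫ u in a..(a + h), F1 (u + h) = ∫ t in (a + h)..(a + 2 * h), F1 t := by
      rw [intervalIntegral.integral_comp_add_right]
      ring_nf
    have hint1 : IntervalIntegrable (fun u => F1 (u + h)) volume a (a + h) := by
      have := ((hcF1.mono (Set.Icc_subset_Icc (by linarith : (0:ℝ) ≤ a + h)
        hha)).intervalIntegrable_of_Icc
        (by linarith : a + h ≤ a + 2 * h)).comp_add_right h
      have e : a + 2 * h - h = a + h := by ring
      simpa [e] using this
    have hint2 : IntervalIntegrable F1 volume a (a + h) :=
      (hcF1.mono (Set.Icc_subset_Icc ha (by linarith))).intervalIntegrable_of_Icc (by linarith)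
    rw [intervalIntegral.integral_sub hint1 hint2, hi1,
      ftc_aux' hcf hcF1 hd1 (by linarith : (0:ℝ) ≤ a + h) (by linarith) hha,
      ftc_aux' hcf hcF1 hd1 ha (by linarith) (by linarith)]
    ring
  have habs : |f (a + 2 * h) - 2 * f (a + h) + f a| ≤ M * h := by
    rw [hΔ]
    have := intervalIntegral.norm_integral_le_of_norm_le_const
      (C := M) (f := fun u => F1 (u + h) - F1 u) (a := a) (b := a + h) ?_
    · simpa [abs_of_pos hh] using this
    · intro x hx
      rw [Set.uIoc_of_le (by linarith : a ≤ a + h)] at hx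
      exact hstep x ⟨le_of_lt hx.1, hx.2⟩
  have hcs : M ^ 2 ≤ 2 * h * Q := by
    have := cs_aux' (by linarith : a ≤ a + 2 * h) (hcF2.mono hsub)
    calc M ^ 2 ≤ (a + 2 * h - a) * Q := this
      _ = 2 * h * Q := by ring
  have hM0 : 0 ≤ M := integral_nonneg (by linarith) (fun x _ => abs_nonneg _)
  calc (f (a + 2 * h) - 2 * f (a + h) + f a) ^ 2
      ≤ (M * h) ^ 2 := by
        rw [← sq_abs]
        exact pow_le_pow_left₀ (abs_nonneg _) habs 2
    _ = M ^ 2 * h ^ 2 := by ring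
    _ ≤ (2 * h * Q) * h ^ 2 := mul_le_mul_of_nonneg_right hcs (sq_nonneg h)
    _ = 2 * h ^ 3 * Q := by ring

open intervalIntegral MeasureTheory

set_option maxHeartbeats 1000000

/-- Boundedness of second difference quotients in discrete `L²`: for `T > 0` there is a
constant `C > 0` depending only on `T` such that for every time step `0 < s ≤ T` and every
`f` of class `C²` on `[0, T]`, with `K = ⌊T/s⌋`, `t^k = k·s`, `t^{k+1/2} = (k + 1/2)·s`,
both discrete `L²` norms in time of `D²_{t/2}f^{k+1/2} = 4(f(t^{k+1}) − 2f(t^{k+1/2}) + f(t^k))/s²`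
(over `k = 0, …, K−1`) and of `D²ₜf^k = (f(t^{k+1}) − 2f(t^k) + f(t^{k−1}))/s²`
(over `k = 1, …, K−1`) are bounded by `C (∫₀ᵀ (f² + f'² + f''²))^{1/2}`. -/
theorem second_difference_quotient_bound (T : ℝ) (hT : 0 < T) :
    ∃ C > (0 : ℝ), ∀ s : ℝ, 0 < s → s ≤ T →
      ∀ f : ℝ → ℝ, ContDiffOn ℝ 2 f (Set.Icc 0 T) →
        Real.sqrt (s * ∑ k ∈ Finset.range ⌊T / s⌋₊,
            (4 * (f (((k : ℝ) + 1) * s) - 2 * f (((k : ℝ) + 1 / 2) * s)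
              + f ((k : ℝ) * s)) / s ^ 2) ^ 2)
          ≤ C * Real.sqrt (∫ t in (0 : ℝ)..T,
              (f t ^ 2 + deriv f t ^ 2 + iteratedDeriv 2 f t ^ 2)) ∧
        Real.sqrt (s * ∑ k ∈ Finset.Ico 1 ⌊T / s⌋₊,
            ((f (((k : ℝ) + 1) * s) - 2 * f ((k : ℝ) * s)
              + f (((k : ℝ) - 1) * s)) / s ^ 2) ^ 2)
          ≤ C * Real.sqrt (∫ t in (0 : ℝ)..T,
              (f t ^ 2 + deriv f t ^ 2 + iteratedDeriv 2 f t ^ 2)) := by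
  refine ⟨2, by norm_num, ?_⟩
  intro s hs hsT f hf
  have hUD : UniqueDiffOn ℝ (Set.Icc 0 T) := uniqueDiffOn_Icc hT
  set F1 := derivWithin f (Set.Icc 0 T) with hF1def
  set F2 := derivWithin F1 (Set.Icc 0 T) with hF2def
  have hF1c : ContDiffOn ℝ 1 F1 (Set.Icc 0 T) := hf.derivWithin hUD (by norm_num)
  have hcf : ContinuousOn f (Set.Icc 0 T) := hf.continuousOn
  have hcF1 : ContinuousOn F1 (Set.Icc 0 T) := hF1c.continuousOn
  have hcF2 : ContinuousOn F2 (Set.Icc 0 T) := hF1c.continuousOn_derivWithin hUD le_rfl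
  have hd1 : ∀ x ∈ Set.Ioo 0 T, HasDerivAt f (F1 x) x := by
    intro x hx
    exact ((hf.differentiableOn (by norm_num) x
      (Set.Ioo_subset_Icc_self hx)).hasDerivWithinAt).hasDerivAt
      (Icc_mem_nhds hx.1 hx.2)
  have hd2 : ∀ x ∈ Set.Ioo 0 T, HasDerivAt F1 (F2 x) x := by
    intro x hx
    exact ((hF1c.differentiableOn (by norm_num) x
      (Set.Ioo_subset_Icc_self hx)).hasDerivWithinAt).hasDerivAt
      (Icc_mem_nhds hx.1 hx.2)
  -- the RHS integral in terms of F1, F2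
  have hae : ∀ x ∈ Set.Ioo 0 T,
      f x ^ 2 + deriv f x ^ 2 + iteratedDeriv 2 f x ^ 2
        = f x ^ 2 + F1 x ^ 2 + F2 x ^ 2 := by
    intro x hx
    have hmem : Set.Icc 0 T ∈ nhds x := Icc_mem_nhds hx.1 hx.2
    have e1 : F1 x = deriv f x := derivWithin_of_mem_nhds hmem
    have e2 : F2 x = iteratedDeriv 2 f x := by
      have h2 : iteratedDeriv 2 f = deriv (deriv f) := by
        funext y
        rw [show (2:ℕ) = 1 + 1 from rfl, iteratedDeriv_succ, iteratedDeriv_one]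
      have heq : deriv f =ᶠ[nhds x] F1 := by
        filter_upwards [isOpen_Ioo.mem_nhds hx] with y hy
        exact (derivWithin_of_mem_nhds (Icc_mem_nhds hy.1 hy.2)).symm
      rw [h2, heq.deriv_eq]
      exact derivWithin_of_mem_nhds hmem
    rw [e1, e2]
  have hInt : (∫ t in (0:ℝ)..T, (f t ^ 2 + deriv f t ^ 2 + iteratedDeriv 2 f t ^ 2))
      = ∫ t in (0:ℝ)..T, (f t ^ 2 + F1 t ^ 2 + F2 t ^ 2) := by
    apply intervalIntegral.integral_congr_ae
    have hT' : {(T:ℝ)}ᶜ ∈ ae (volume : Measure ℝ) :=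
      compl_mem_ae_iff.mpr (measure_singleton T)
    filter_upwards [hT'] with x hxT hx
    rw [Set.uIoc_of_le hT.le] at hx
    exact hae x ⟨hx.1, lt_of_le_of_ne hx.2 hxT⟩
  set Y := ∫ t in (0:ℝ)..T, (f t ^ 2 + F1 t ^ 2 + F2 t ^ 2) with hYdef
  have hYint : IntervalIntegrable (fun t => f t ^ 2 + F1 t ^ 2 + F2 t ^ 2) volume 0 T :=
    (((hcf.pow 2).add (hcF1.pow 2)).add (hcF2.pow 2)).intervalIntegrable_of_Icc hT.le
  have hF2int : IntervalIntegrable (fun t => F2 t ^ 2) volume 0 T :=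
    (hcF2.pow 2).intervalIntegrable_of_Icc hT.le
  have hY2 : (∫ t in (0:ℝ)..T, F2 t ^ 2) ≤ Y := by
    apply intervalIntegral.integral_mono_on hT.le hF2int hYint
    intro x _
    nlinarith [sq_nonneg (f x), sq_nonneg (F1 x)]
  set K := ⌊T / s⌋₊ with hKdef
  have hKs : (K : ℝ) * s ≤ T := by
    have h1 : (K : ℝ) ≤ T / s := Nat.floor_le (le_of_lt (div_pos hT hs))
    calc (K : ℝ) * s ≤ (T / s) * s := mul_le_mul_of_nonneg_right h1 hs.le
      _ = T := div_mul_cancel₀ T (ne_of_gt hs)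
  -- interval integrals of F2² over grid intervals
  have hgint : ∀ a b : ℝ, 0 ≤ a → a ≤ b → b ≤ T →
      IntervalIntegrable (fun t => F2 t ^ 2) volume a b := fun a b ha hab hb =>
    ((hcF2.mono (Set.Icc_subset_Icc ha hb)).pow 2).intervalIntegrable_of_Icc hab
  have hg0 : ∀ a b : ℝ, a ≤ b → (0:ℝ) ≤ ∫ t in a..b, F2 t ^ 2 := fun a b hab =>
    intervalIntegral.integral_nonneg hab (fun x _ => sq_nonneg _)
  -- per-k bound, half step
  have key1 : ∀ k : ℕ, k + 1 ≤ K →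
      (4 * (f (((k : ℝ) + 1) * s) - 2 * f (((k : ℝ) + 1 / 2) * s)
        + f ((k : ℝ) * s)) / s ^ 2) ^ 2
      ≤ (4 / s) * ∫ t in ((k : ℝ) * s)..(((k : ℝ) + 1) * s), F2 t ^ 2 := by
    intro k hk
    have hkK : ((k : ℝ) + 1) ≤ (K : ℝ) := by exact_mod_cast hk
    have ha : (0:ℝ) ≤ (k : ℝ) * s := by positivity
    have hb : (k : ℝ) * s + 2 * (s / 2) ≤ T := by nlinarith
    have hsd := sd_aux' hcf hcF1 hcF2 hd1 hd2 ha (by positivity : (0:ℝ) < s / 2) hb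
    have e1 : (k : ℝ) * s + 2 * (s / 2) = ((k : ℝ) + 1) * s := by ring
    have e2 : (k : ℝ) * s + s / 2 = ((k : ℝ) + 1 / 2) * s := by ring
    rw [e1, e2] at hsd
    set Q := ∫ t in ((k : ℝ) * s)..(((k : ℝ) + 1) * s), F2 t ^ 2 with hQd
    rw [div_pow, div_le_iff₀ (by positivity)]
    have e3 : 4 / s * Q * (s ^ 2) ^ 2 = 4 * s ^ 3 * Q := by
      field_simp
    rw [e3]
    nlinarith [hsd]
  -- per-k bound, full step
  have key2 : ∀ k : ℕ, 1 ≤ k → k + 1 ≤ K →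
      ((f (((k : ℝ) + 1) * s) - 2 * f ((k : ℝ) * s) + f (((k : ℝ) - 1) * s)) / s ^ 2) ^ 2
      ≤ (2 / s) * ∫ t in (((k : ℝ) - 1) * s)..(((k : ℝ) + 1) * s), F2 t ^ 2 := by
    intro k hk1 hk
    have hkK : ((k : ℝ) + 1) ≤ (K : ℝ) := by exact_mod_cast hk
    have hk1' : (1:ℝ) ≤ (k : ℝ) := by exact_mod_cast hk1
    have ha : (0:ℝ) ≤ ((k : ℝ) - 1) * s := by nlinarith
    have hb : ((k : ℝ) - 1) * s + 2 * s ≤ T := by nlinarith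
    have hsd := sd_aux' hcf hcF1 hcF2 hd1 hd2 ha hs hb
    have e1 : ((k : ℝ) - 1) * s + 2 * s = ((k : ℝ) + 1) * s := by ring
    have e2 : ((k : ℝ) - 1) * s + s = (k : ℝ) * s := by ring
    rw [e1, e2] at hsd
    set Q := ∫ t in (((k : ℝ) - 1) * s)..(((k : ℝ) + 1) * s), F2 t ^ 2 with hQd
    rw [div_pow, div_le_iff₀ (by positivity)]
    have e3 : 2 / s * Q * (s ^ 2) ^ 2 = 2 * s ^ 3 * Q := by
      field_simp
    rw [e3]
    nlinarith [hsd]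
  -- telescoping sums of grid integrals
  have hadj : ∀ n : ℕ, n ≤ K →
      ∑ k ∈ Finset.range n, (∫ t in ((k:ℝ)*s)..(((k:ℝ)+1)*s), F2 t ^ 2)
      = ∫ t in (0:ℝ)..((n:ℝ)*s), F2 t ^ 2 := by
    intro n
    induction n with
    | zero => intro _; simp
    | succ n ih =>
      intro hn
      have hn' : n ≤ K := Nat.le_of_succ_le hn
      have hnK : ((n:ℝ)+1) ≤ (K:ℝ) := by exact_mod_cast hn
      have hb1 : (0:ℝ) ≤ (n:ℝ)*s := by positivity
      have hb2 : (n:ℝ)*s ≤ ((n:ℝ)+1)*s := by nlinarith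
      have hb3 : ((n:ℝ)+1)*s ≤ T := by nlinarith [hKs]
      rw [Finset.sum_range_succ, ih hn',
        intervalIntegral.integral_add_adjacent_intervals
          (hgint 0 ((n:ℝ)*s) le_rfl hb1 (by linarith))
          (hgint ((n:ℝ)*s) (((n:ℝ)+1)*s) hb1 hb2 hb3)]
      congr 1
      push_cast
      ring
  have hKT : (∫ t in (0:ℝ)..((K:ℝ)*s), F2 t ^ 2) ≤ ∫ t in (0:ℝ)..T, F2 t ^ 2 :=
    intervalIntegral.integral_mono_interval le_rfl (by positivity) hKs
      (MeasureTheory.ae_of_all _ (fun x => sq_nonneg _)) hF2int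
  have hY0 : (0:ℝ) ≤ Y := le_trans (hg0 0 T hT.le) hY2
  have hsqrt4 : ∀ X : ℝ, X ≤ 4 * Y → Real.sqrt X ≤ 2 * Real.sqrt Y := by
    intro X hX
    calc Real.sqrt X ≤ Real.sqrt (4 * Y) := Real.sqrt_le_sqrt hX
      _ = 2 * Real.sqrt Y := by
        rw [show (4:ℝ) = 2 ^ 2 by norm_num, Real.sqrt_mul (by positivity),
          Real.sqrt_sq (by norm_num : (0:ℝ) ≤ 2)]
  rw [hInt]
  constructor
  · -- half-step estimate
    apply hsqrt4
    have h1 : ∑ k ∈ Finset.range K,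
        (4 * (f (((k : ℝ) + 1) * s) - 2 * f (((k : ℝ) + 1 / 2) * s)
          + f ((k : ℝ) * s)) / s ^ 2) ^ 2
        ≤ ∑ k ∈ Finset.range K,
          (4 / s) * ∫ t in ((k:ℝ)*s)..(((k:ℝ)+1)*s), F2 t ^ 2 :=
      Finset.sum_le_sum (fun k hk => key1 k (Finset.mem_range.mp hk))
    have h2 : ∑ k ∈ Finset.range K,
        (4 / s) * ∫ t in ((k:ℝ)*s)..(((k:ℝ)+1)*s), F2 t ^ 2
        = (4 / s) * ∫ t in (0:ℝ)..((K:ℝ)*s), F2 t ^ 2 := by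
      rw [← Finset.mul_sum, hadj K le_rfl]
    have h3 : (0:ℝ) ≤ ∫ t in (0:ℝ)..((K:ℝ)*s), F2 t ^ 2 := hg0 _ _ (by positivity)
    calc s * ∑ k ∈ Finset.range K,
        (4 * (f (((k : ℝ) + 1) * s) - 2 * f (((k : ℝ) + 1 / 2) * s)
          + f ((k : ℝ) * s)) / s ^ 2) ^ 2
        ≤ s * ((4 / s) * ∫ t in (0:ℝ)..((K:ℝ)*s), F2 t ^ 2) := by
          apply mul_le_mul_of_nonneg_left _ hs.le
          rw [← h2]; exact h1
      _ = 4 * ∫ t in (0:ℝ)..((K:ℝ)*s), F2 t ^ 2 := by field_simp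
      _ ≤ 4 * Y := by nlinarith [hKT, hY2]
  · -- full-step estimate
    apply hsqrt4
    have hsplit : ∀ k : ℕ, 1 ≤ k → k + 1 ≤ K →
        (∫ t in (((k:ℝ)-1)*s)..(((k:ℝ)+1)*s), F2 t ^ 2)
        = (∫ t in (((k:ℝ)-1)*s)..((k:ℝ)*s), F2 t ^ 2)
          + ∫ t in ((k:ℝ)*s)..(((k:ℝ)+1)*s), F2 t ^ 2 := by
      intro k hk1 hk
      have hkK : ((k : ℝ) + 1) ≤ (K : ℝ) := by exact_mod_cast hk
      have hk1' : (1:ℝ) ≤ (k : ℝ) := by exact_mod_cast hk1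
      have b1 : (0:ℝ) ≤ ((k:ℝ)-1)*s := mul_nonneg (by linarith) hs.le
      have b2 : ((k:ℝ)-1)*s ≤ (k:ℝ)*s := mul_le_mul_of_nonneg_right (by linarith) hs.le
      have b3 : (k:ℝ)*s ≤ ((k:ℝ)+1)*s := mul_le_mul_of_nonneg_right (by linarith) hs.le
      have b4 : ((k:ℝ)+1)*s ≤ T := le_trans (mul_le_mul_of_nonneg_right hkK hs.le) hKs
      rw [intervalIntegral.integral_add_adjacent_intervals
        (hgint _ _ b1 b2 (by linarith)) (hgint _ _ (by linarith) b3 b4)]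
    have hg0' : ∀ k : ℕ, (0:ℝ) ≤ ∫ t in ((k:ℝ)*s)..(((k:ℝ)+1)*s), F2 t ^ 2 := by
      intro k
      exact hg0 _ _ (by nlinarith)
    have hA : ∑ k ∈ Finset.Ico 1 K, (∫ t in (((k:ℝ)-1)*s)..((k:ℝ)*s), F2 t ^ 2)
        ≤ ∫ t in (0:ℝ)..((K:ℝ)*s), F2 t ^ 2 := by
      rw [Finset.sum_Ico_eq_sum_range]
      have he : ∀ j ∈ Finset.range (K - 1),
          (∫ t in ((((1+j : ℕ)):ℝ)-1)*s..(((1+j : ℕ):ℝ))*s, F2 t ^ 2)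
          = ∫ t in ((j:ℝ)*s)..(((j:ℝ)+1)*s), F2 t ^ 2 := by
        intro j _
        congr 1 <;> push_cast <;> ring
      rw [Finset.sum_congr rfl he, ← hadj K le_rfl]
      exact Finset.sum_le_sum_of_subset_of_nonneg
        (Finset.range_subset_range.mpr (Nat.sub_le K 1)) (fun k _ _ => hg0' k)
    have hB : ∑ k ∈ Finset.Ico 1 K, (∫ t in ((k:ℝ)*s)..(((k:ℝ)+1)*s), F2 t ^ 2)
        ≤ ∫ t in (0:ℝ)..((K:ℝ)*s), F2 t ^ 2 := by
      rw [← hadj K le_rfl]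
      exact Finset.sum_le_sum_of_subset_of_nonneg
        (by rw [Finset.range_eq_Ico]; exact Finset.Ico_subset_Ico (Nat.zero_le 1) le_rfl)
        (fun k _ _ => hg0' k)
    have h1 : ∑ k ∈ Finset.Ico 1 K,
        ((f (((k : ℝ) + 1) * s) - 2 * f ((k : ℝ) * s) + f (((k : ℝ) - 1) * s)) / s ^ 2) ^ 2
        ≤ ∑ k ∈ Finset.Ico 1 K,
          (2 / s) * ∫ t in (((k:ℝ)-1)*s)..(((k:ℝ)+1)*s), F2 t ^ 2 := by
      apply Finset.sum_le_sum
      intro k hk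
      have hk' := Finset.mem_Ico.mp hk
      exact key2 k hk'.1 hk'.2
    have h2 : ∑ k ∈ Finset.Ico 1 K,
        (2 / s) * ∫ t in (((k:ℝ)-1)*s)..(((k:ℝ)+1)*s), F2 t ^ 2
        ≤ (2 / s) * (2 * ∫ t in (0:ℝ)..((K:ℝ)*s), F2 t ^ 2) := by
      rw [← Finset.mul_sum]
      apply mul_le_mul_of_nonneg_left _ (by positivity : (0:ℝ) ≤ 2 / s)
      have hcong : ∑ k ∈ Finset.Ico 1 K, (∫ t in (((k:ℝ)-1)*s)..(((k:ℝ)+1)*s), F2 t ^ 2)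
          = ∑ k ∈ Finset.Ico 1 K, ((∫ t in (((k:ℝ)-1)*s)..((k:ℝ)*s), F2 t ^ 2)
            + ∫ t in ((k:ℝ)*s)..(((k:ℝ)+1)*s), F2 t ^ 2) := by
        apply Finset.sum_congr rfl
        intro k hk
        have hk' := Finset.mem_Ico.mp hk
        exact hsplit k hk'.1 hk'.2
      rw [hcong, Finset.sum_add_distrib]
      linarith [hA, hB]
    have h3 : (0:ℝ) ≤ ∫ t in (0:ℝ)..((K:ℝ)*s), F2 t ^ 2 := hg0 _ _ (by positivity)
    calc s * ∑ k ∈ Finset.Ico 1 K,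
        ((f (((k : ℝ) + 1) * s) - 2 * f ((k : ℝ) * s) + f (((k : ℝ) - 1) * s)) / s ^ 2) ^ 2
        ≤ s * ((2 / s) * (2 * ∫ t in (0:ℝ)..((K:ℝ)*s), F2 t ^ 2)) := by
          apply mul_le_mul_of_nonneg_left (le_trans h1 h2) hs.le
      _ = 4 * ∫ t in (0:ℝ)..((K:ℝ)*s), F2 t ^ 2 := by field_simp; ring
      _ ≤ 4 * Y := by nlinarith [hKT, hY2]
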